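/- arXiv:1704.01657 — 2 statements merged into one kernel-verified Lean document; each statement's English description precedes it below -/
import Mathlib

section
/- For every integer pair (s,t) with s ≥ 0, t ≥ 0 and s+t ≥ 2, either (s,t) = (1,1), or the polynomial q(x) = (2−x)^s x^t − 1 has a complex root x₀ with x₀ ≠ 0 and x₀ ≠ 1. -/
open Polynomial

private lemma aux_pow_lt (s : ℕ) (hs : 2 ≤ s) : 3 ^ s + 1 < 4 ^ s := by
  induction s with
  | zero => omega
  | succ n ih =>
    rcases Nat.lt_or_ge n 2 with h | h
    · interval_cases n <;> simp_all
    · have := ih (by omega)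
      have h3 : 3 ^ (n+1) = 3 * 3 ^ n := by ring
      have h4 : 4 ^ (n+1) = 4 * 4 ^ n := by ring
      have h1 : 1 ≤ 4 ^ n := Nat.one_le_pow n 4 (by norm_num)
      calc 3 ^ (n+1) + 1 = 3 * 3 ^ n + 1 := by ring_nf
        _ < 3 * 4 ^ n + 1 := by omega
        _ ≤ 4 * 4 ^ n := by omega
        _ = 4 ^ (n+1) := by ring

theorem exists_nontrivial_root_q (s t : ℕ) (hst : 2 ≤ s + t) :
    (s = 1 ∧ t = 1) ∨
    ∃ x₀ : ℂ, (2 - x₀) ^ s * x₀ ^ t - 1 = 0 ∧ x₀ ≠ 0 ∧ x₀ ≠ 1 := by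
  by_cases h11 : s = 1 ∧ t = 1
  · exact Or.inl h11
  right
  rcases Nat.eq_zero_or_pos s with hs0 | hs1
  · -- s = 0 : need x₀^t = 1, x₀ ≠ 0, 1 ; t ≥ 2
    subst hs0
    have ht2 : 2 ≤ t := by omega
    have ht0 : t ≠ 0 := by omega
    have hprim := Complex.isPrimitiveRoot_exp t ht0
    exact ⟨_, by simp [hprim.pow_eq_one], hprim.ne_zero ht0, hprim.ne_one (by omega)⟩
  rcases Nat.eq_zero_or_pos t with ht0 | ht1
  · -- t = 0 : need (2 - x₀)^s = 1 ; s ≥ 2, take x₀ = 2 - ζ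
    subst ht0
    have hs2 : 2 ≤ s := by omega
    have hs0 : s ≠ 0 := by omega
    have hprim := Complex.isPrimitiveRoot_exp s hs0
    set ζ := Complex.exp (2 * Real.pi * Complex.I / s)
    refine ⟨2 - ζ, ?_, ?_, ?_⟩
    · have := hprim.pow_eq_one
      simp only [pow_zero, mul_one]
      rw [show (2 : ℂ) - (2 - ζ) = ζ by ring, this]
      ring
    · intro h
      have hζ2 : ζ = 2 := by linear_combination -h
      have : (2 : ℂ) ^ s = 1 := by rw [← hζ2]; exact hprim.pow_eq_one
      have : ((2 ^ s : ℕ) : ℂ) = ((1 : ℕ) : ℂ) := by push_cast; simpa using this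
      have : (2 : ℕ) ^ s = 1 := Nat.cast_injective this
      have := Nat.one_lt_two_pow (n := s) (by omega)
      omega
    · intro h
      have hζ1 : ζ = 1 := by linear_combination -h
      exact hprim.ne_one (by omega) hζ1
  -- main case: s ≥ 1, t ≥ 1
  by_contra hno
  push_neg at hno
  -- hno : ∀ x₀, (2 - x₀)^s * x₀^t - 1 = 0 → x₀ ≠ 0 → x₀ = 1
  set p : Polynomial ℂ := (2 - X) ^ s * X ^ t - 1 with hp
  have heval : ∀ x : ℂ, p.eval x = (2 - x) ^ s * x ^ t - 1 := by
    intro x; simp [hp]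
  have hdeg : p.natDegree = s + t := by
    rw [hp]
    compute_degree!
    have hif : ¬(s = 0 ∧ t = 0) := by omega
    simp [hif, Int.negSucc_eq]
  have hpne : p ≠ 0 := by
    intro h
    rw [h] at hdeg
    simp at hdeg
    omega
  have hsplits : p.Splits := IsAlgClosed.splits p
  have hcard : p.roots.card = s + t := by
    rw [(Polynomial.splits_iff_card_roots).mp hsplits, hdeg]
  have hroots : p.roots = Multiset.replicate (s + t) 1 := by
    rw [Multiset.eq_replicate]
    refine ⟨hcard, fun a ha => ?_⟩
    have hra : p.eval a = 0 := (Polynomial.isRoot_of_mem_roots ha)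
    rw [heval] at hra
    refine hno a hra (fun h0 => ?_)
    rw [h0] at hra
    rw [zero_pow (by omega : t ≠ 0)] at hra
    simp at hra
  have hfac := hsplits.eq_prod_roots
  rw [hroots, Multiset.map_replicate, Multiset.prod_replicate] at hfac
  set c := p.leadingCoeff with hc
  have E : ∀ x : ℂ, (2 - x) ^ s * x ^ t - 1 = c * (x - 1) ^ (s + t) := by
    intro x
    have h1 := congrArg (Polynomial.eval x) hfac
    rw [heval] at h1
    simpa using h1
  have e2 := E 2
  rw [show (2:ℂ) - 2 = 0 by ring, zero_pow (by omega : s ≠ 0)] at e2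
  have hcval : c = -1 := by linear_combination -e2
  have e0 := E 0
  rw [zero_pow (by omega : t ≠ 0), hcval] at e0
  have heven : Even (s + t) := by
    have h1 : ((-1 : ℂ)) ^ (s + t) = 1 := by
      have : (0:ℂ) - 1 = -1 := by ring
      rw [this] at e0
      linear_combination e0
    rw [neg_one_pow_eq_one_iff_even (by norm_num : (-1 : ℂ) ≠ 1)] at h1
    exact h1
  have e3 := E 3
  rw [hcval, show (2:ℂ) - 3 = -1 by ring, show (3:ℂ) - 1 = 2 by ring] at e3
  have em := E (-1)
  rw [hcval, show (2:ℂ) - (-1) = 3 by ring, show (-1:ℂ) - 1 = -2 by ring] at em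
  rw [show ((-2:ℂ)) ^ (s+t) = (-1)^(s+t) * 2^(s+t) by rw [← neg_one_mul]; rw [mul_pow],
      heven.neg_one_pow, one_mul] at em
  -- e3 : (-1)^s * 3^t - 1 = -1 * 2^(s+t)
  -- em : 3^s * (-1)^t - 1 = -1 * 2^(s+t)
  have hst' : t = s := by
    have key : ((-1:ℂ))^s * 3 ^ t = (-1)^t * 3 ^ s := by linear_combination e3 - em
    have h3 : (3:ℂ) ^ t = 3 ^ s := by
      rcases Nat.even_or_odd s with hse | hso
      · have hte : Even t := by
          rcases heven with ⟨k, hk⟩; rcases hse with ⟨m, hm⟩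
          exact ⟨k - m, by omega⟩
        rw [hse.neg_one_pow, hte.neg_one_pow, one_mul, one_mul] at key
        exact key
      · have hto : Odd t := by
          rcases heven with ⟨k, hk⟩; rcases hso with ⟨m, hm⟩
          exact ⟨k - m - 1, by omega⟩
        rw [hso.neg_one_pow, hto.neg_one_pow] at key
        linear_combination -key
    have h3' : ((3 ^ t : ℕ) : ℂ) = ((3 ^ s : ℕ) : ℂ) := by push_cast; exact h3
    exact Nat.pow_right_injective (by norm_num) (Nat.cast_injective h3')
  rw [hst'] at e3
  -- now e3 : (-1)^s * 3^s - 1 = -1 * 2^(s+s)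
  have h4 : (2:ℂ) ^ (s + s) = 4 ^ s := by
    rw [show s + s = 2 * s by ring, pow_mul]; norm_num
  rw [h4] at e3
  rcases Nat.even_or_odd s with hse | hso
  · rw [hse.neg_one_pow, one_mul] at e3
    have : (3:ℂ) ^ s + 4 ^ s = 1 := by linear_combination e3
    have h' : ((3 ^ s + 4 ^ s : ℕ) : ℂ) = ((1 : ℕ) : ℂ) := by push_cast; exact this
    have h'' : 3 ^ s + 4 ^ s = 1 := Nat.cast_injective h'
    have := Nat.one_le_two_pow (n := s)
    nlinarith [Nat.one_le_pow s 3 (by norm_num), Nat.one_le_pow s 4 (by norm_num)]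
  · rw [hso.neg_one_pow] at e3
    have : (3:ℂ) ^ s + 1 = 4 ^ s := by linear_combination -e3
    have h' : ((3 ^ s + 1 : ℕ) : ℂ) = ((4 ^ s : ℕ) : ℂ) := by push_cast; exact this
    have h'' : 3 ^ s + 1 = 4 ^ s := Nat.cast_injective h'
    have hs1' : s = 1 := by
      by_contra hs1''
      have : 2 ≤ s := by omega
      have := aux_pow_lt s this
      omega
    exact h11 ⟨hs1', hst'.trans hs1'⟩
end

section
/- Let t be a primitive n-th root of unity with n ≥ 5, and let φ be a Möbius transformation. If |φ(t^i)| ∈ {0, 1} ∪ {∞} for all 1 ≤ i ≤ 5 (interpreting φ(z) = ∞ when the denominator vanishes), then φ maps the unit circle onto the unit circle. -/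
open Complex

local notation "conj'" => starRingEnd ℂ

theorem moebius_of_five_roots_maps_circle (n : ℕ) (hn : 5 ≤ n) (t : ℂ)
    (ht : t ^ n = 1) (hprim : ∀ k : ℕ, 0 < k → k < n → t ^ k ≠ 1)
    (a b c d : ℂ) (hM : a * d - b * c ≠ 0)
    (h : ∀ i : ℕ, 1 ≤ i → i ≤ 5 →
      a * t ^ i + b = 0 ∨ c * t ^ i + d = 0 ∨
        ‖(a * t ^ i + b) / (c * t ^ i + d)‖ = 1) :
    (fun z : ℂ => (a * z + b) / (c * z + d)) '' {z : ℂ | ‖z‖ = 1}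
      = {z : ℂ | ‖z‖ = 1} := by
  classical
  have ht0 : t ≠ 0 := by
    intro h0
    rw [h0, zero_pow (by omega : n ≠ 0)] at ht
    exact one_ne_zero ht.symm
  have habst : ‖t‖ = 1 := by
    have h1 : ‖t‖ ^ n = 1 := by rw [← norm_pow, ht, norm_one]
    rcases lt_trichotomy ‖t‖ 1 with h' | h' | h'
    · exfalso
      have := pow_lt_one₀ (norm_nonneg t) h' (by omega : n ≠ 0)
      rw [h1] at this; exact lt_irrefl 1 this
    · exact h'
    · exfalso
      have := one_lt_pow₀ h' (by omega : n ≠ 0)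
      rw [h1] at this; exact lt_irrefl 1 this
  have hz1 : ∀ m : ℕ, t ^ m * conj' (t ^ m) = 1 := by
    intro m
    rw [Complex.mul_conj, Complex.normSq_eq_norm_sq, norm_pow, habst, one_pow, one_pow,
      Complex.ofReal_one]
  have hdistlt : ∀ i j : ℕ, 1 ≤ i → j ≤ 5 → i < j → t ^ i ≠ t ^ j := by
    intro i j hi hj hij heq
    have h1 : t ^ i * t ^ (j - i) = t ^ i * 1 := by
      have hij' : i + (j - i) = j := by omega
      rw [mul_one, ← pow_add, hij', heq]
    have h2 := mul_left_cancel₀ (pow_ne_zero i ht0) h1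
    exact hprim (j - i) (by omega) (by omega) h2
  have hdist' : ∀ i j : ℕ, 1 ≤ i → i ≤ 5 → 1 ≤ j → j ≤ 5 → i ≠ j → t ^ i ≠ t ^ j := by
    intro i j hi1 hi5 hj1 hj5 hne
    rcases hne.lt_or_gt with h' | h'
    · exact hdistlt i j hi1 hj5 h'
    · exact (hdistlt j i hj1 hi5 h').symm
  -- classification of each point
  have key : ∀ i : ℕ, 1 ≤ i → i ≤ 5 → a * t ^ i + b ≠ 0 → c * t ^ i + d ≠ 0 →
      (a * t ^ i + b) * conj' (a * t ^ i + b) = (c * t ^ i + d) * conj' (c * t ^ i + d) := by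
    intro i h1 h5 hnum hden
    rcases h i h1 h5 with h' | h' | h'
    · exact absurd h' hnum
    · exact absurd h' hden
    · rw [norm_div] at h'
      have habs : ‖a * t ^ i + b‖ = ‖c * t ^ i + d‖ :=
        (div_eq_one_iff_eq (norm_ne_zero_iff.mpr hden)).mp h'
      rw [Complex.mul_conj, Complex.mul_conj, Complex.normSq_eq_norm_sq, Complex.normSq_eq_norm_sq,
        habs]
  -- counting: at least three good indices
  set S : Finset ℕ := Finset.Icc 1 5 with hSdef
  set A : Finset ℕ := S.filter (fun i => a * t ^ i + b = 0) with hAdef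
  set B : Finset ℕ := S.filter (fun i => c * t ^ i + d = 0) with hBdef
  have hAcard : A.card ≤ 1 := by
    rw [Finset.card_le_one]
    intro i hi j hj
    by_contra hne
    simp only [hAdef, hSdef, Finset.mem_filter, Finset.mem_Icc] at hi hj
    have hz : t ^ i ≠ t ^ j := hdist' i j hi.1.1 hi.1.2 hj.1.1 hj.1.2 hne
    have ha0 : a = 0 := by
      have h1 : a * (t ^ i - t ^ j) = 0 := by linear_combination hi.2 - hj.2
      rcases mul_eq_zero.mp h1 with h' | h'
      · exact h'
      · exact absurd (sub_eq_zero.mp h') hz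
    have hb0 : b = 0 := by linear_combination hi.2 - t ^ i * ha0
    exact hM (by rw [ha0, hb0]; ring)
  have hBcard : B.card ≤ 1 := by
    rw [Finset.card_le_one]
    intro i hi j hj
    by_contra hne
    simp only [hBdef, hSdef, Finset.mem_filter, Finset.mem_Icc] at hi hj
    have hz : t ^ i ≠ t ^ j := hdist' i j hi.1.1 hi.1.2 hj.1.1 hj.1.2 hne
    have hc0 : c = 0 := by
      have h1 : c * (t ^ i - t ^ j) = 0 := by linear_combination hi.2 - hj.2
      rcases mul_eq_zero.mp h1 with h' | h'
      · exact h'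
      · exact absurd (sub_eq_zero.mp h') hz
    have hd0 : d = 0 := by linear_combination hi.2 - t ^ i * hc0
    exact hM (by rw [hc0, hd0]; ring)
  have hGcard : 2 < (S \ (A ∪ B)).card := by
    have h1 : (A ∪ B).card ≤ 2 := le_trans (Finset.card_union_le A B) (by omega)
    have h2 : S.card = 5 := by rw [hSdef]; simp
    have h3 := Finset.le_card_sdiff (A ∪ B) S
    omega
  obtain ⟨i, j, k, hiG, hjG, hkG, hij, hik, hjk⟩ := Finset.two_lt_card_iff.mp hGcard
  have hmem : ∀ m ∈ S \ (A ∪ B),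
      (1 ≤ m ∧ m ≤ 5) ∧ a * t ^ m + b ≠ 0 ∧ c * t ^ m + d ≠ 0 := by
    intro m hm
    simp only [Finset.mem_sdiff, Finset.mem_union, Finset.mem_filter, hAdef, hBdef, hSdef,
      Finset.mem_Icc] at hm
    push_neg at hm
    tauto
  obtain ⟨hib, hin, hid⟩ := hmem i hiG
  obtain ⟨hjb, hjn, hjd⟩ := hmem j hjG
  obtain ⟨hkb, hkn, hkd⟩ := hmem k hkG
  -- the quadratic vanishing at the three points
  have hQ : ∀ m : ℕ, 1 ≤ m → m ≤ 5 → a * t ^ m + b ≠ 0 → c * t ^ m + d ≠ 0 →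
      (a * conj' b - c * conj' d) * (t ^ m) ^ 2 +
        (a * conj' a + b * conj' b - c * conj' c - d * conj' d) * t ^ m +
        (conj' a * b - conj' c * d) = 0 := by
    intro m h1 h5 hnum hden
    have hE := key m h1 h5 hnum hden
    simp only [map_add, map_mul, map_pow] at hE
    have hzzm : t ^ m * conj' t ^ m = 1 := by
      have := hz1 m; rwa [map_pow] at this
    linear_combination t ^ m * hE -
      ((a * conj' a - c * conj' c) * t ^ m + (conj' a * b - conj' c * d)) * hzzm
  have Q1 := hQ i hib.1 hib.2 hin hid
  have Q2 := hQ j hjb.1 hjb.2 hjn hjd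
  have Q3 := hQ k hkb.1 hkb.2 hkn hkd
  have h12 : t ^ i ≠ t ^ j := hdist' i j hib.1 hib.2 hjb.1 hjb.2 hij
  have h13 : t ^ i ≠ t ^ k := hdist' i k hib.1 hib.2 hkb.1 hkb.2 hik
  have h23 : t ^ j ≠ t ^ k := hdist' j k hjb.1 hjb.2 hkb.1 hkb.2 hjk
  -- extract coefficients
  have e12 : (a * conj' b - c * conj' d) * (t ^ i + t ^ j) +
      (a * conj' a + b * conj' b - c * conj' c - d * conj' d) = 0 :=
    mul_left_cancel₀ (sub_ne_zero.mpr h12) (by linear_combination Q1 - Q2)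
  have e13 : (a * conj' b - c * conj' d) * (t ^ i + t ^ k) +
      (a * conj' a + b * conj' b - c * conj' c - d * conj' d) = 0 :=
    mul_left_cancel₀ (sub_ne_zero.mpr h13) (by linear_combination Q1 - Q3)
  have hα : a * conj' b - c * conj' d = 0 :=
    mul_left_cancel₀ (sub_ne_zero.mpr h23) (by linear_combination e12 - e13)
  have hβ : a * conj' a + b * conj' b - c * conj' c - d * conj' d = 0 := by
    linear_combination e12 - (t ^ i + t ^ j) * hα
  have hγ : conj' a * b - conj' c * d = 0 := by
    linear_combination Q1 - (t ^ i) ^ 2 * hα - t ^ i * hβ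
  -- algebraic consequences
  have hxyuv : (a * conj' a) * (b * conj' b) = (c * conj' c) * (d * conj' d) := by
    linear_combination (conj' a * b) * hα + (c * conj' d) * hγ
  have hxu_false : a * conj' a = c * conj' c → False := by
    intro h3
    have h4 : (a * d - b * c) * (conj' a * conj' d - conj' b * conj' c) = 0 := by
      linear_combination (d * conj' d - c * conj' c) * h3 + (c * conj' c) * hβ -
        (d * conj' c) * hα - (c * conj' d) * hγ
    have h5 : (a * d - b * c) * conj' (a * d - b * c) = 0 := by
      rw [map_sub, map_mul, map_mul]; exact h4
    rw [Complex.mul_conj] at h5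
    exact hM (Complex.normSq_eq_zero.mp (by exact_mod_cast h5))
  have hxv : a * conj' a = d * conj' d := by
    have h2 : (a * conj' a - c * conj' c) * (a * conj' a - d * conj' d) = 0 := by
      linear_combination (a * conj' a) * hβ - hxyuv
    rcases mul_eq_zero.mp h2 with h3 | h3
    · exact absurd (by linear_combination h3) hxu_false
    · linear_combination h3
  have hyu : b * conj' b = c * conj' c := by linear_combination hβ - hxv
  have hs : d * conj' b - conj' a * c = 0 := by
    by_cases ha : a = 0
    · by_cases hd : d = 0
      · have ha' : conj' a = 0 := by rw [ha, map_zero]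
        rw [hd, ha']; ring
      · have hd' : conj' d ≠ 0 := by
          intro h'
          exact hd (by simpa using congrArg conj' h')
        have h5 : conj' d * (d * conj' b - conj' a * c) = 0 := by
          linear_combination conj' a * hα - conj' b * hxv
        exact (mul_eq_zero.mp h5).resolve_left hd'
    · have h5 : a * (d * conj' b - conj' a * c) = 0 := by
        linear_combination d * hα - c * hxv
      exact (mul_eq_zero.mp h5).resolve_left ha
  have hs' : conj' d * b - a * conj' c = 0 := by
    have := congrArg conj' hs
    simpa [map_sub, map_mul] using this
  -- the set equality
  ext w
  simp only [Set.mem_image, Set.mem_setOf_eq]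
  constructor
  · rintro ⟨z, hz, rfl⟩
    have hzz : z * conj' z = 1 := by
      rw [Complex.mul_conj, Complex.normSq_eq_norm_sq, hz]; norm_num
    have hE : (a * z + b) * conj' (a * z + b) = (c * z + d) * conj' (c * z + d) := by
      simp only [map_add, map_mul]
      linear_combination (a * conj' a - c * conj' c) * hzz + z * hα + conj' z * hγ + hβ
    have hns : Complex.normSq (a * z + b) = Complex.normSq (c * z + d) := by
      have h' := hE
      rw [Complex.mul_conj, Complex.mul_conj] at h'
      exact_mod_cast h'
    have hden : c * z + d ≠ 0 := by
      intro h0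
      have hnum : a * z + b = 0 := by
        have h' : Complex.normSq (a * z + b) = 0 := by rw [hns, h0, map_zero]
        exact Complex.normSq_eq_zero.mp h'
      have hz0 : z ≠ 0 := by
        intro h0'; rw [h0'] at hz; simp at hz
      have h' : (a * d - b * c) * z = 0 := by linear_combination d * hnum - b * h0
      rcases mul_eq_zero.mp h' with h'' | h''
      · exact hM h''
      · exact hz0 h''
    have habs : ‖a * z + b‖ = ‖c * z + d‖ := by
      rw [Complex.norm_def, Complex.norm_def, hns]
    rw [norm_div, habs]
    exact div_self (norm_ne_zero_iff.mpr hden)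
  · intro hw
    have hww : w * conj' w = 1 := by
      rw [Complex.mul_conj, Complex.normSq_eq_norm_sq, hw]; norm_num
    have haw : a - w * c ≠ 0 := by
      intro h0
      apply hxu_false
      have haw' : a = w * c := by linear_combination h0
      rw [haw', map_mul]
      linear_combination (c * conj' c) * hww
    refine ⟨(w * d - b) / (a - w * c), ?_, ?_⟩
    · have hnum_eq : (w * d - b) * conj' (w * d - b) = (a - w * c) * conj' (a - w * c) := by
        simp only [map_sub, map_mul]
        linear_combination (d * conj' d - c * conj' c) * hww - w * hs - conj' w * hs' -
          hxv + hyu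
      have hns2 : Complex.normSq (w * d - b) = Complex.normSq (a - w * c) := by
        have h' := hnum_eq
        rw [Complex.mul_conj, Complex.mul_conj] at h'
        exact_mod_cast h'
      have habs2 : ‖w * d - b‖ = ‖a - w * c‖ := by
        rw [Complex.norm_def, Complex.norm_def, hns2]
      rw [norm_div, habs2]
      exact div_self (norm_ne_zero_iff.mpr haw)
    · have hcd : c * ((w * d - b) / (a - w * c)) + d = (a * d - b * c) / (a - w * c) := by
        rw [eq_div_iff haw, add_mul, mul_assoc, div_mul_cancel₀ _ haw]
        ring
      have hcd0 : c * ((w * d - b) / (a - w * c)) + d ≠ 0 := by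
        rw [hcd]; exact div_ne_zero hM haw
      show (a * ((w * d - b) / (a - w * c)) + b) / (c * ((w * d - b) / (a - w * c)) + d) = w
      rw [div_eq_iff hcd0]
      field_simp
      ring
end
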